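/- Let A be an n×n real symmetric matrix, Q an n×k real matrix, q_{k+1} ∈ ℝⁿ, β_{k+1} ∈ ℝ, and T a k×k real symmetric tridiagonal matrix such that A·Q = Q·T + β_{k+1}·q_{k+1}·e_kᵀ and the n×(k+1) matrix [Q, q_{k+1}] has orthonormal columns. Let x ∈ ℝⁿ be nonzero with Q·e₁ = x/‖x‖, let f : ℝ → ℝ, and set y = ‖x‖ · Q·f(T)·e₁. Then for every real polynomial p of degree less than k and every real D such that |f(t) − p(t)| ≤ D for all t ∈ [λmin(A), λmax(A)], one has ‖f(A)·x − y‖ ≤ 2D‖x‖. -/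

import Mathlib

open Matrix Polynomial Set

/-- Euclidean norm of a vector in `ℝⁿ`. -/
noncomputable def vecNorm {n : ℕ} (v : Fin n → ℝ) : ℝ :=
  Real.sqrt (∑ i, v i ^ 2)

/-- Spectral (operator) norm of a real matrix. -/
noncomputable def matNorm {m n : ℕ} (A : Matrix (Fin m) (Fin n) ℝ) : ℝ :=
  sSup {c : ℝ | ∃ v : Fin n → ℝ, vecNorm v ≤ 1 ∧ c = vecNorm (A.mulVec v)}

/-- Largest eigenvalue of a square real matrix. -/
noncomputable def lmax {n : ℕ} (A : Matrix (Fin n) (Fin n) ℝ) : ℝ :=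
  sSup {μ : ℝ | ∃ v : Fin n → ℝ, v ≠ 0 ∧ A.mulVec v = μ • v}

/-- Smallest eigenvalue of a square real matrix. -/
noncomputable def lmin {n : ℕ} (A : Matrix (Fin n) (Fin n) ℝ) : ℝ :=
  sInf {μ : ℝ | ∃ v : Fin n → ℝ, v ≠ 0 ∧ A.mulVec v = μ • v}

/-- A matrix is tridiagonal if `T i j = 0` whenever `|i - j| > 1`. -/
def IsTridiagonal {k : ℕ} (T : Matrix (Fin k) (Fin k) ℝ) : Prop :=
  ∀ i j : Fin k, 1 < |(i : ℤ) - (j : ℤ)| → T i j = 0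

/-- The matrix function `f(A)` of a real symmetric matrix, defined through the
eigendecomposition `A = V Λ Vᵀ` as `V f(Λ) Vᵀ`. -/
noncomputable def matFun {n : ℕ} {A : Matrix (Fin n) (Fin n) ℝ} (hA : A.IsHermitian)
    (f : ℝ → ℝ) : Matrix (Fin n) (Fin n) ℝ :=
  (hA.eigenvectorUnitary : Matrix (Fin n) (Fin n) ℝ) * Matrix.diagonal (f ∘ hA.eigenvalues) *
    star (hA.eigenvectorUnitary : Matrix (Fin n) (Fin n) ℝ)

/-- The `i`-th Chebyshev polynomial of the first kind, shifted and stretched to the range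
`[lmin A - η, lmax A + η]`: with `r_max = lmax A + η`, `r_min = lmin A - η` and
`δ = 2 / (r_max - r_min)`, this is `y ↦ T_i (δ (y - r_min) - 1)`. -/
noncomputable def shiftedCheb {n : ℕ} (A : Matrix (Fin n) (Fin n) ℝ) (η : ℝ) (i : ℕ) :
    Polynomial ℝ :=
  (Polynomial.Chebyshev.T ℝ i).comp
    (Polynomial.C (2 / ((lmax A + η) - (lmin A - η))) *
      (Polynomial.X - Polynomial.C (lmin A - η)) - 1)

/-! ### Auxiliary lemmas -/

lemma vecNorm_eq_sqrt_dot {n : ℕ} (v : Fin n → ℝ) :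
    vecNorm v = Real.sqrt (v ⬝ᵥ v) := by
  simp [vecNorm, dotProduct, sq]

lemma vecNorm_nonneg {n : ℕ} (v : Fin n → ℝ) : 0 ≤ vecNorm v := Real.sqrt_nonneg _

lemma vecNorm_eq_norm {n : ℕ} (v : Fin n → ℝ) :
    vecNorm v = ‖(WithLp.equiv 2 (Fin n → ℝ)).symm v‖ := by
  rw [EuclideanSpace.norm_eq]
  simp [vecNorm, sq_abs]

lemma vecNorm_sub_le {n : ℕ} (u v : Fin n → ℝ) :
    vecNorm (u - v) ≤ vecNorm u + vecNorm v := by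
  rw [vecNorm_eq_norm, vecNorm_eq_norm, vecNorm_eq_norm]
  exact norm_sub_le _ _

lemma vecNorm_smul {n : ℕ} (c : ℝ) (v : Fin n → ℝ) :
    vecNorm (c • v) = |c| * vecNorm v := by
  rw [vecNorm_eq_norm, vecNorm_eq_norm]
  rw [show (WithLp.equiv 2 (Fin n → ℝ)).symm (c • v)
      = c • (WithLp.equiv 2 (Fin n → ℝ)).symm v from rfl]
  simp [norm_smul, Real.norm_eq_abs]

lemma vecNorm_pos {n : ℕ} {v : Fin n → ℝ} (hv : v ≠ 0) : 0 < vecNorm v := by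
  rw [vecNorm_eq_norm, norm_pos_iff]
  intro h
  exact hv ((WithLp.equiv 2 (Fin n → ℝ)).symm.injective (h.trans rfl))

lemma vecNorm_single {n : ℕ} (i : Fin n) : vecNorm (Pi.single i 1) = 1 := by
  rw [vecNorm_eq_sqrt_dot]
  simp [dotProduct, Pi.single_apply]

lemma star_mat_real {n : ℕ} (M : Matrix (Fin n) (Fin n) ℝ) : star M = Mᵀ := by
  rw [star_eq_conjTranspose, conjTranspose_eq_transpose_of_trivial]

lemma dot_mulVec_orth {n m : ℕ} {M : Matrix (Fin n) (Fin m) ℝ} (h : Mᵀ * M = 1)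
    (z : Fin m → ℝ) : (M *ᵥ z) ⬝ᵥ (M *ᵥ z) = z ⬝ᵥ z := by
  rw [dotProduct_mulVec, ← mulVec_transpose, mulVec_mulVec, h, one_mulVec]

lemma vecNorm_mulVec_orth {n m : ℕ} {M : Matrix (Fin n) (Fin m) ℝ} (h : Mᵀ * M = 1)
    (z : Fin m → ℝ) : vecNorm (M *ᵥ z) = vecNorm z := by
  rw [vecNorm_eq_sqrt_dot, vecNorm_eq_sqrt_dot, dot_mulVec_orth h]

/-- Norm bound for `U * diagonal d * star U` with `U` unitary and `|d i| ≤ D`. -/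
lemma vecNorm_conj_diag_le {m : ℕ} {U : Matrix (Fin m) (Fin m) ℝ}
    (hU : U ∈ Matrix.unitaryGroup (Fin m) ℝ) {d : Fin m → ℝ} {D : ℝ}
    (hd : ∀ i, |d i| ≤ D) (hD0 : 0 ≤ D) (v : Fin m → ℝ) :
    vecNorm ((U * Matrix.diagonal d * star U) *ᵥ v) ≤ D * vecNorm v := by
  have hUtU : Uᵀ * U = 1 := by
    rw [← star_mat_real]; exact (Unitary.mem_iff.mp hU).1
  have hUUt : U * Uᵀ = 1 := by
    rw [← star_mat_real]; exact (Unitary.mem_iff.mp hU).2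
  set w : Fin m → ℝ := (star U) *ᵥ v with hw
  have h1 : (U * Matrix.diagonal d * star U) *ᵥ v = U *ᵥ (Matrix.diagonal d *ᵥ w) := by
    rw [← mulVec_mulVec, ← mulVec_mulVec]
  rw [h1, vecNorm_mulVec_orth hUtU]
  have hwv : vecNorm w = vecNorm v := by
    rw [hw, star_mat_real]
    exact vecNorm_mulVec_orth (by rw [transpose_transpose]; exact hUUt) v
  rw [← hwv, vecNorm, vecNorm]
  rw [← Real.sqrt_mul_self hD0, ← Real.sqrt_mul (mul_self_nonneg D)]
  apply Real.sqrt_le_sqrt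
  rw [Finset.mul_sum]
  apply Finset.sum_le_sum
  intro i _
  have : (Matrix.diagonal d *ᵥ w) i = d i * w i := by
    simp [mulVec, dotProduct, Matrix.diagonal_apply, Finset.sum_ite_eq]
  rw [this, mul_pow]
  have h2 : (d i) ^ 2 ≤ D * D := by
    rw [← sq_abs (d i), sq, ← sq, sq]
    exact mul_le_mul (hd i) (hd i) (abs_nonneg _) hD0
  exact mul_le_mul_of_nonneg_right h2 (sq_nonneg _)

lemma spectral_real {m : ℕ} {B : Matrix (Fin m) (Fin m) ℝ} (hB : B.IsHermitian) :
    B = (hB.eigenvectorUnitary : Matrix (Fin m) (Fin m) ℝ) * Matrix.diagonal hB.eigenvalues *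
      star (hB.eigenvectorUnitary : Matrix (Fin m) (Fin m) ℝ) := by
  have := hB.spectral_theorem
  rwa [RCLike.ofReal_real_eq_id, Function.id_comp] at this

lemma conj_unitary_eigen_aux {m : ℕ} {B U : Matrix (Fin m) (Fin m) ℝ} {d : Fin m → ℝ}
    (hB : B = U * Matrix.diagonal d * star U)
    (hU1 : star U * U = 1) (hU2 : U * star U = 1) {μ : ℝ} {v : Fin m → ℝ}
    (hv : v ≠ 0) (hμ : B *ᵥ v = μ • v) : ∃ i, d i = μ := by
  set w : Fin m → ℝ := star U *ᵥ v with hw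
  have hwv : U *ᵥ w = v := by rw [hw, mulVec_mulVec, hU2, one_mulVec]
  have hw0 : w ≠ 0 := by
    intro h; apply hv; rw [← hwv, h, mulVec_zero]
  have hsb : star U * B = Matrix.diagonal d * star U := by
    rw [hB, ← mul_assoc, ← mul_assoc, hU1, one_mul]
  have hdiag : Matrix.diagonal d *ᵥ w = μ • w := by
    have h := congrArg (fun z => star U *ᵥ z) hμ
    simp only [mulVec_smul] at h
    rw [hw, ← h, mulVec_mulVec, mulVec_mulVec, hsb]
  obtain ⟨i, hi⟩ := Function.ne_iff.mp hw0
  refine ⟨i, ?_⟩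
  have h := congrFun hdiag i
  rw [mulVec_diagonal] at h
  simp only [Pi.smul_apply, smul_eq_mul] at h
  exact mul_right_cancel₀ hi (by rw [h])

lemma eigSet_eq {m : ℕ} {B : Matrix (Fin m) (Fin m) ℝ} (hB : B.IsHermitian) :
    {μ : ℝ | ∃ v : Fin m → ℝ, v ≠ 0 ∧ B.mulVec v = μ • v} = Set.range hB.eigenvalues := by
  have hU := (hB.eigenvectorUnitary).2
  have hU1 := (Unitary.mem_iff.mp hU).1
  have hU2 := (Unitary.mem_iff.mp hU).2
  ext μ
  simp only [Set.mem_setOf_eq, Set.mem_range]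
  constructor
  · rintro ⟨v, hv, hμ⟩
    obtain ⟨i, hi⟩ := conj_unitary_eigen_aux (spectral_real hB) hU1 hU2 hv hμ
    exact ⟨i, hi⟩
  · rintro ⟨i, rfl⟩
    exact ⟨_, fun h => hB.eigenvectorBasis.orthonormal.ne_zero i
      ((WithLp.equiv 2 (Fin m → ℝ)).injective (h.trans rfl)), hB.mulVec_eigenvectorBasis i⟩

lemma eig_le_lmax {m : ℕ} {B : Matrix (Fin m) (Fin m) ℝ} (hB : B.IsHermitian) (i : Fin m) :
    hB.eigenvalues i ≤ lmax B := by
  apply le_csSup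
  · rw [eigSet_eq hB]; exact (Set.finite_range _).bddAbove
  · rw [eigSet_eq hB]; exact Set.mem_range_self i

lemma lmin_le_eig {m : ℕ} {B : Matrix (Fin m) (Fin m) ℝ} (hB : B.IsHermitian) (i : Fin m) :
    lmin B ≤ hB.eigenvalues i := by
  apply csInf_le
  · rw [eigSet_eq hB]; exact (Set.finite_range _).bddBelow
  · rw [eigSet_eq hB]; exact Set.mem_range_self i

lemma dot_diag_le {m : ℕ} {d : Fin m → ℝ} {c : ℝ} (hd : ∀ i, d i ≤ c) (w : Fin m → ℝ) :
    w ⬝ᵥ (Matrix.diagonal d *ᵥ w) ≤ c * (w ⬝ᵥ w) := by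
  simp only [dotProduct, mulVec_diagonal, Finset.mul_sum]
  apply Finset.sum_le_sum
  intro i _
  have : w i * (d i * w i) = d i * (w i * w i) := by ring
  rw [this]
  exact mul_le_mul_of_nonneg_right (hd i) (mul_self_nonneg _)

lemma le_dot_diag {m : ℕ} {d : Fin m → ℝ} {c : ℝ} (hd : ∀ i, c ≤ d i) (w : Fin m → ℝ) :
    c * (w ⬝ᵥ w) ≤ w ⬝ᵥ (Matrix.diagonal d *ᵥ w) := by
  simp only [dotProduct, mulVec_diagonal, Finset.mul_sum]
  apply Finset.sum_le_sum
  intro i _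
  have : w i * (d i * w i) = d i * (w i * w i) := by ring
  rw [this]
  exact mul_le_mul_of_nonneg_right (hd i) (mul_self_nonneg _)

lemma dot_spectral {m : ℕ} {B : Matrix (Fin m) (Fin m) ℝ} (hB : B.IsHermitian)
    (v : Fin m → ℝ) :
    v ⬝ᵥ (B *ᵥ v) =
      (star (hB.eigenvectorUnitary : Matrix (Fin m) (Fin m) ℝ) *ᵥ v) ⬝ᵥ
        (Matrix.diagonal hB.eigenvalues *ᵥ
          (star (hB.eigenvectorUnitary : Matrix (Fin m) (Fin m) ℝ) *ᵥ v)) := by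
  conv_lhs => rw [spectral_real hB]
  rw [← mulVec_mulVec, ← mulVec_mulVec, dotProduct_mulVec, ← mulVec_transpose,
    ← star_mat_real]

lemma dot_spectral_self {m : ℕ} {B : Matrix (Fin m) (Fin m) ℝ} (hB : B.IsHermitian)
    (v : Fin m → ℝ) :
    (star (hB.eigenvectorUnitary : Matrix (Fin m) (Fin m) ℝ) *ᵥ v) ⬝ᵥ
      (star (hB.eigenvectorUnitary : Matrix (Fin m) (Fin m) ℝ) *ᵥ v) = v ⬝ᵥ v := by
  rw [star_mat_real]
  exact dot_mulVec_orth (by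
    rw [transpose_transpose, ← star_mat_real]
    exact (Unitary.mem_iff.mp (hB.eigenvectorUnitary).2).2) v

lemma rayleigh_le {m : ℕ} {B : Matrix (Fin m) (Fin m) ℝ} (hB : B.IsHermitian) {c : ℝ}
    (hd : ∀ i, hB.eigenvalues i ≤ c) (v : Fin m → ℝ) :
    v ⬝ᵥ (B *ᵥ v) ≤ c * (v ⬝ᵥ v) := by
  rw [dot_spectral hB, ← dot_spectral_self hB v]
  exact dot_diag_le hd _

lemma le_rayleigh {m : ℕ} {B : Matrix (Fin m) (Fin m) ℝ} (hB : B.IsHermitian) {c : ℝ}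
    (hd : ∀ i, c ≤ hB.eigenvalues i) (v : Fin m → ℝ) :
    c * (v ⬝ᵥ v) ≤ v ⬝ᵥ (B *ᵥ v) := by
  rw [dot_spectral hB, ← dot_spectral_self hB v]
  exact le_dot_diag hd _

/-- Powers of a tridiagonal matrix have bandwidth `j`. -/
lemma tridiag_pow_band {k : ℕ} {T : Matrix (Fin k) (Fin k) ℝ} (hT : IsTridiagonal T) :
    ∀ j : ℕ, ∀ i l : Fin k, (j : ℤ) < |(i : ℤ) - (l : ℤ)| → (T ^ j) i l = 0 := by
  intro j
  induction j with
  | zero =>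
    intro i l h
    rw [pow_zero]
    apply Matrix.one_apply_ne
    intro he
    rw [he] at h
    simp at h
  | succ j ih =>
    intro i l h
    rw [pow_succ, Matrix.mul_apply]
    apply Finset.sum_eq_zero
    intro mm _
    by_cases h1 : (j : ℤ) < |(i : ℤ) - (mm : ℤ)|
    · rw [ih i mm h1, zero_mul]
    · push_neg at h1
      have h2 : 1 < |(mm : ℤ) - (l : ℤ)| := by
        have := abs_sub_abs_le_abs_sub ((i : ℤ) - (l : ℤ)) ((i : ℤ) - (mm : ℤ))
        have h3 : (i : ℤ) - (l : ℤ) - ((i : ℤ) - (mm : ℤ)) = (mm : ℤ) - (l : ℤ) := by ring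
        rw [h3] at this
        omega
      rw [hT mm l h2, mul_zero]

/-- aeval of a diagonal matrix. -/
lemma aeval_diagonal {m : ℕ} (d : Fin m → ℝ) (p : Polynomial ℝ) :
    aeval (Matrix.diagonal d) p = Matrix.diagonal (fun i => p.eval (d i)) := by
  have h := Polynomial.aeval_algHom_apply
    (Matrix.diagonalAlgHom (R := ℝ) (n := Fin m) (α := ℝ)) d p
  simp only [Matrix.diagonalAlgHom_apply] at h
  rw [h]
  have h3 : (aeval d) p = fun i => p.eval (d i) := by
    funext i
    have h2 := Polynomial.aeval_algHom_apply (Pi.evalAlgHom ℝ (fun _ : Fin m => ℝ) i) d p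
    simp only [Pi.evalAlgHom_apply] at h2
    rw [← h2, Polynomial.aeval_def, Polynomial.eval, Algebra.algebraMap_self]
  rw [h3]

/-- Conjugation by a unitary commutes with aeval. -/
lemma aeval_conj {m : ℕ} {U M : Matrix (Fin m) (Fin m) ℝ}
    (hU1 : star U * U = 1) (hU2 : U * star U = 1) (p : Polynomial ℝ) :
    aeval (U * M * star U) p = U * aeval M p * star U := by
  have hpow : ∀ j : ℕ, (U * M * star U) ^ j = U * M ^ j * star U := by
    intro j
    induction j with
    | zero => rw [pow_zero, pow_zero, mul_one, hU2]
    | succ j ih =>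
      rw [pow_succ, pow_succ, ih]
      rw [show U * M ^ j * star U * (U * M * star U)
          = U * M ^ j * (star U * U) * M * star U by noncomm_ring]
      rw [hU1, mul_one, mul_assoc U (M ^ j) M]
  rw [aeval_eq_sum_range, aeval_eq_sum_range]
  rw [Finset.mul_sum, Finset.sum_mul]
  apply Finset.sum_congr rfl
  intro i _
  rw [hpow, mul_smul_comm, smul_mul_assoc]

/-- `aeval B p` equals `matFun hB (p.eval)`. -/
lemma aeval_eq_matFun {m : ℕ} {B : Matrix (Fin m) (Fin m) ℝ} (hB : B.IsHermitian)
    (p : Polynomial ℝ) : aeval B p = matFun hB (fun t => p.eval t) := by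
  have hU := (hB.eigenvectorUnitary).2
  have hU1 := (Unitary.mem_iff.mp hU).1
  have hU2 := (Unitary.mem_iff.mp hU).2
  conv_lhs => rw [spectral_real hB]
  rw [aeval_conj hU1 hU2, aeval_diagonal]
  rfl

/-- `matFun` is subtractive in the function argument. -/
lemma matFun_sub {m : ℕ} {B : Matrix (Fin m) (Fin m) ℝ} (hB : B.IsHermitian)
    (f g : ℝ → ℝ) : matFun hB f - matFun hB g = matFun hB (fun t => f t - g t) := by
  unfold matFun
  have hd : Matrix.diagonal (f ∘ hB.eigenvalues) - Matrix.diagonal (g ∘ hB.eigenvalues)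
      = Matrix.diagonal ((fun t => f t - g t) ∘ hB.eigenvalues) := by
    rw [Matrix.diagonal_sub]
    rfl
  rw [← Matrix.sub_mul, ← Matrix.mul_sub, hd]

lemma sum_mulVec' {n m : ℕ} {ι : Type*} (s : Finset ι) (M : ι → Matrix (Fin n) (Fin m) ℝ)
    (v : Fin m → ℝ) : (∑ i ∈ s, M i) *ᵥ v = ∑ i ∈ s, (M i *ᵥ v) := by
  classical
  induction s using Finset.induction_on with
  | empty => simp [Matrix.zero_mulVec]
  | @insert a s h ih => rw [Finset.sum_insert h, Finset.sum_insert h, Matrix.add_mulVec, ih]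

lemma mulVec_sum' {n m : ℕ} {ι : Type*} (s : Finset ι) (M : Matrix (Fin n) (Fin m) ℝ)
    (w : ι → Fin m → ℝ) : M *ᵥ (∑ i ∈ s, w i) = ∑ i ∈ s, M *ᵥ w i := by
  classical
  induction s using Finset.induction_on with
  | empty => simp [Matrix.mulVec_zero]
  | @insert a s h ih => rw [Finset.sum_insert h, Finset.sum_insert h, Matrix.mulVec_add, ih]

lemma vecMulVec_mulVec' {n k : ℕ} (a : Fin n → ℝ) (b w : Fin k → ℝ) :
    Matrix.vecMulVec a b *ᵥ w = (b ⬝ᵥ w) • a := by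
  funext i
  simp only [Matrix.mulVec, Matrix.vecMulVec_apply, dotProduct, Pi.smul_apply, smul_eq_mul]
  rw [Finset.sum_mul]
  apply Finset.sum_congr rfl
  intro j _
  ring

lemma orth_blocks {n k : ℕ} {Q : Matrix (Fin n) (Fin k) ℝ} {q : Fin n → ℝ}
    (horth : (Matrix.fromCols Q (Matrix.replicateCol (Fin 1) q))ᵀ *
      Matrix.fromCols Q (Matrix.replicateCol (Fin 1) q) = 1) :
    Qᵀ * Q = 1 ∧ Qᵀ *ᵥ q = 0 := by
  rw [transpose_fromCols, fromRows_mul_fromCols, ← fromBlocks_one, fromBlocks_inj]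
    at horth
  obtain ⟨h1, h2, _, _⟩ := horth
  refine ⟨h1, ?_⟩
  funext i
  have h3 := congrFun (congrFun h2 i) 0
  simp only [Matrix.mul_apply, Matrix.replicateCol_apply, Matrix.zero_apply] at h3
  simpa [Matrix.mulVec, dotProduct] using h3

/-- Lanczos exactness for powers. -/
lemma lanczos_exact_pow {n k : ℕ} (hk : 0 < k) {A : Matrix (Fin n) (Fin n) ℝ}
    {Q : Matrix (Fin n) (Fin k) ℝ} {qk1 : Fin n → ℝ} {β : ℝ} {T : Matrix (Fin k) (Fin k) ℝ}
    (hTtri : IsTridiagonal T)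
    (hrel : A * Q = Q * T +
      β • Matrix.vecMulVec qk1 (Pi.single (⟨k - 1, Nat.sub_lt hk Nat.one_pos⟩ : Fin k) 1)) :
    ∀ j, j < k → (A ^ j) *ᵥ (Q *ᵥ Pi.single (⟨0, hk⟩ : Fin k) 1)
      = Q *ᵥ ((T ^ j) *ᵥ Pi.single (⟨0, hk⟩ : Fin k) 1) := by
  intro j
  induction j with
  | zero => intro _; rw [pow_zero, pow_zero, Matrix.one_mulVec, Matrix.one_mulVec]
  | succ j ih =>
    intro hj
    have ihh := ih (by omega)
    rw [pow_succ', pow_succ', ← Matrix.mulVec_mulVec, ihh, Matrix.mulVec_mulVec, hrel,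
      Matrix.add_mulVec, Matrix.smul_mulVec, vecMulVec_mulVec']
    have hzero : (Pi.single (⟨k - 1, Nat.sub_lt hk Nat.one_pos⟩ : Fin k) 1 : Fin k → ℝ) ⬝ᵥ
        ((T ^ j) *ᵥ Pi.single (⟨0, hk⟩ : Fin k) 1) = 0 := by
      rw [Matrix.mulVec_single]
      have hb : (T ^ j) (⟨k - 1, Nat.sub_lt hk Nat.one_pos⟩ : Fin k) (⟨0, hk⟩ : Fin k) = 0 := by
        apply tridiag_pow_band hTtri
        simp only [Fin.val_mk]
        have : (j : ℤ) < (k : ℤ) - 1 := by omega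
        rw [Nat.cast_sub (by omega)]
        rw [abs_of_nonneg (by omega)]
        omega
      simp only [dotProduct, Pi.single_apply, ite_mul, one_mul, zero_mul,
        Finset.sum_ite_eq, Finset.mem_univ, if_true]
      simpa using hb
    rw [hzero, zero_smul, smul_zero, add_zero]
    show (Q * T) *ᵥ (T ^ j *ᵥ Pi.single (⟨0, hk⟩ : Fin k) 1)
      = Q *ᵥ (T * T ^ j) *ᵥ Pi.single (⟨0, hk⟩ : Fin k) 1
    rw [← Matrix.mulVec_mulVec, Matrix.mulVec_mulVec _ T (T ^ j)]

/-- Lanczos exactness for polynomials of degree `< k`. -/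
lemma lanczos_exact_poly {n k : ℕ} (hk : 0 < k) {A : Matrix (Fin n) (Fin n) ℝ}
    {Q : Matrix (Fin n) (Fin k) ℝ} {qk1 : Fin n → ℝ} {β : ℝ} {T : Matrix (Fin k) (Fin k) ℝ}
    (hTtri : IsTridiagonal T)
    (hrel : A * Q = Q * T +
      β • Matrix.vecMulVec qk1 (Pi.single (⟨k - 1, Nat.sub_lt hk Nat.one_pos⟩ : Fin k) 1))
    {p : Polynomial ℝ} (hdeg : p.natDegree < k) :
    (aeval A p) *ᵥ (Q *ᵥ Pi.single (⟨0, hk⟩ : Fin k) 1)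
      = Q *ᵥ ((aeval T p) *ᵥ Pi.single (⟨0, hk⟩ : Fin k) 1) := by
  rw [Polynomial.aeval_eq_sum_range' hdeg, Polynomial.aeval_eq_sum_range' hdeg,
    sum_mulVec', sum_mulVec', mulVec_sum']
  apply Finset.sum_congr rfl
  intro i hi
  rw [Matrix.smul_mulVec, Matrix.smul_mulVec, Matrix.mulVec_smul,
    lanczos_exact_pow hk hTtri hrel i (Finset.mem_range.mp hi)]

theorem lanczos_exact_function_approximation
    {n k : ℕ} (hk : 0 < k)
    (A : Matrix (Fin n) (Fin n) ℝ) (Q : Matrix (Fin n) (Fin k) ℝ)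
    (qk1 : Fin n → ℝ) (β : ℝ) (T : Matrix (Fin k) (Fin k) ℝ)
    (hA : A.IsHermitian) (hT : T.IsHermitian) (hTtri : IsTridiagonal T)
    (hrel : A * Q = Q * T +
      β • Matrix.vecMulVec qk1 (Pi.single (⟨k - 1, Nat.sub_lt hk Nat.one_pos⟩ : Fin k) 1))
    (horth : (Matrix.fromCols Q (Matrix.replicateCol (Fin 1) qk1))ᵀ *
      Matrix.fromCols Q (Matrix.replicateCol (Fin 1) qk1) = 1)
    (x : Fin n → ℝ) (hx : x ≠ 0)
    (hq1 : Q.mulVec (Pi.single (⟨0, hk⟩ : Fin k) 1) = (vecNorm x)⁻¹ • x)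
    (f : ℝ → ℝ) (y : Fin n → ℝ)
    (hy : y = vecNorm x • Q.mulVec ((matFun hT f).mulVec (Pi.single (⟨0, hk⟩ : Fin k) 1)))
    (p : Polynomial ℝ) (hdeg : p.natDegree < k) (D : ℝ)
    (hD : ∀ t ∈ Set.Icc (lmin A) (lmax A), |f t - p.eval t| ≤ D) :
    vecNorm ((matFun hA f).mulVec x - y) ≤ 2 * D * vecNorm x := by
  have hn : 0 < n := by
    rcases Nat.eq_zero_or_pos n with h | h
    · subst h
      exact absurd (_root_.funext fun i : Fin 0 => i.elim0) hx
    · exact h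
  obtain ⟨hQQ, hQq⟩ := orth_blocks horth
  set e1 : Fin k → ℝ := Pi.single (⟨0, hk⟩ : Fin k) 1 with he1
  set g : ℝ → ℝ := fun t => f t - p.eval t with hg
  have hIcc : ∀ i, hA.eigenvalues i ∈ Set.Icc (lmin A) (lmax A) :=
    fun i => ⟨lmin_le_eig hA i, eig_le_lmax hA i⟩
  have hD0 : 0 ≤ D := le_trans (abs_nonneg _) (hD _ (hIcc ⟨0, hn⟩))
  -- T = Qᵀ A Q
  have hMvv : ∀ (M : Matrix (Fin k) (Fin n) ℝ) (a : Fin n → ℝ) (b : Fin k → ℝ),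
      M * Matrix.vecMulVec a b = Matrix.vecMulVec (M *ᵥ a) b := by
    intro M a b
    ext i j
    simp only [Matrix.mul_apply, Matrix.vecMulVec_apply, Matrix.mulVec, dotProduct,
      Finset.sum_mul]
    apply Finset.sum_congr rfl
    intro l _
    ring
  have hTQAQ : T = Qᵀ * A * Q := by
    have hz : Matrix.vecMulVec (0 : Fin k → ℝ)
        (Pi.single (⟨k - 1, Nat.sub_lt hk Nat.one_pos⟩ : Fin k) 1) = 0 := by
      ext i j
      simp [Matrix.vecMulVec_apply]
    calc T = 1 * T := (one_mul T).symm
      _ = (Qᵀ * Q) * T := by rw [hQQ]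
      _ = Qᵀ * (Q * T) := by rw [Matrix.mul_assoc]
      _ = Qᵀ * (Q * T) + β • Matrix.vecMulVec (Qᵀ *ᵥ qk1)
            (Pi.single (⟨k - 1, Nat.sub_lt hk Nat.one_pos⟩ : Fin k) 1) := by
          rw [hQq, hz, smul_zero, add_zero]
      _ = Qᵀ * (Q * T) + β • (Qᵀ * Matrix.vecMulVec qk1
            (Pi.single (⟨k - 1, Nat.sub_lt hk Nat.one_pos⟩ : Fin k) 1)) := by
          rw [hMvv]
      _ = Qᵀ * (Q * T + β • Matrix.vecMulVec qk1
            (Pi.single (⟨k - 1, Nat.sub_lt hk Nat.one_pos⟩ : Fin k) 1)) := by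
          rw [Matrix.mul_add, Matrix.mul_smul]
      _ = Qᵀ * (A * Q) := by rw [hrel]
      _ = Qᵀ * A * Q := by rw [Matrix.mul_assoc]
  -- eigenvalues of T lie in the spectral interval of A
  have hTicc : ∀ i, hT.eigenvalues i ∈ Set.Icc (lmin A) (lmax A) := by
    intro i
    have hmem : hT.eigenvalues i ∈ {μ : ℝ | ∃ v : Fin k → ℝ, v ≠ 0 ∧ T *ᵥ v = μ • v} := by
      rw [eigSet_eq hT]; exact Set.mem_range_self i
    obtain ⟨w, hw0, hw⟩ := hmem
    have hc : 0 < w ⬝ᵥ w := by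
      obtain ⟨j, hj⟩ := Function.ne_iff.mp hw0
      exact Finset.sum_pos' (fun l _ => mul_self_nonneg (w l))
        ⟨j, Finset.mem_univ j, mul_self_pos.mpr hj⟩
    have hray : (hT.eigenvalues i) * (w ⬝ᵥ w) = (Q *ᵥ w) ⬝ᵥ (A *ᵥ (Q *ᵥ w)) := by
      have h1 : w ⬝ᵥ (T *ᵥ w) = hT.eigenvalues i * (w ⬝ᵥ w) := by
        rw [hw, dotProduct_smul, smul_eq_mul]
      rw [← h1, hTQAQ, ← Matrix.mulVec_mulVec, ← Matrix.mulVec_mulVec, dotProduct_mulVec,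
        Matrix.vecMul_transpose]
    have hQw : (Q *ᵥ w) ⬝ᵥ (Q *ᵥ w) = w ⬝ᵥ w := dot_mulVec_orth hQQ w
    constructor
    · have := le_rayleigh hA (fun j => lmin_le_eig hA j) (Q *ᵥ w)
      rw [hQw, ← hray] at this
      exact le_of_mul_le_mul_right this hc
    · have := rayleigh_le hA (fun j => eig_le_lmax hA j) (Q *ᵥ w)
      rw [hQw, ← hray] at this
      exact le_of_mul_le_mul_right this hc
  -- decomposition
  have hxnz : vecNorm x ≠ 0 := ne_of_gt (vecNorm_pos hx)
  have hxu : x = vecNorm x • (Q *ᵥ e1) := by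
    rw [hq1, smul_smul, mul_inv_cancel₀ hxnz, one_smul]
  have hexact : (aeval A p) *ᵥ x = vecNorm x • (Q *ᵥ ((aeval T p) *ᵥ e1)) := by
    conv_lhs => rw [hxu]
    rw [Matrix.mulVec_smul, lanczos_exact_poly hk hTtri hrel hdeg]
  have h1 : matFun hA g = matFun hA f - aeval A p := by
    rw [aeval_eq_matFun hA, matFun_sub]
  have h2 : matFun hT g = matFun hT f - aeval T p := by
    rw [aeval_eq_matFun hT, matFun_sub]
  have hdecomp : (matFun hA f) *ᵥ x - y
      = (matFun hA g) *ᵥ x - vecNorm x • (Q *ᵥ ((matFun hT g) *ᵥ e1)) := by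
    rw [h1, h2, Matrix.sub_mulVec, Matrix.sub_mulVec, Matrix.mulVec_sub, smul_sub,
      hexact, hy]
    abel
  rw [hdecomp]
  have habs : ∀ i, |(g ∘ hA.eigenvalues) i| ≤ D := fun i => hD _ (hIcc i)
  have habsT : ∀ i, |(g ∘ hT.eigenvalues) i| ≤ D := fun i => hD _ (hTicc i)
  have hb1 : vecNorm ((matFun hA g) *ᵥ x) ≤ D * vecNorm x :=
    vecNorm_conj_diag_le (hA.eigenvectorUnitary).2 habs hD0 x
  have hb2 : vecNorm (vecNorm x • (Q *ᵥ ((matFun hT g) *ᵥ e1))) ≤ vecNorm x * D := by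
    rw [vecNorm_smul, abs_of_nonneg (vecNorm_nonneg x), vecNorm_mulVec_orth hQQ]
    have hb := vecNorm_conj_diag_le (hT.eigenvectorUnitary).2 habsT hD0 e1
    rw [he1, vecNorm_single, mul_one] at hb
    exact mul_le_mul_of_nonneg_left hb (vecNorm_nonneg x)
  calc vecNorm ((matFun hA g) *ᵥ x - vecNorm x • (Q *ᵥ ((matFun hT g) *ᵥ e1)))
      ≤ vecNorm ((matFun hA g) *ᵥ x)
        + vecNorm (vecNorm x • (Q *ᵥ ((matFun hT g) *ᵥ e1))) := vecNorm_sub_le _ _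
    _ ≤ D * vecNorm x + vecNorm x * D := add_le_add hb1 hb2
    _ = 2 * D * vecNorm x := by ring
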